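/- The function g(x) = (e^{x²} - 1)/(e^x - 1)² is strictly convex on (0, ∞). -/

import Mathlib

set_option maxHeartbeats 1000000

open Real Set Filter

noncomputable def hhF (x : ℝ) : ℝ := log (exp (x ^ 2) - 1) - 2 * log (exp x - 1)

noncomputable def h1F (x : ℝ) : ℝ :=
  2 * x * exp (x ^ 2) / (exp (x ^ 2) - 1) - 2 * exp x / (exp x - 1)

noncomputable def h2F (x : ℝ) : ℝ :=
  2 * exp (x ^ 2) / (exp (x ^ 2) - 1) - 4 * x ^ 2 * exp (x ^ 2) / (exp (x ^ 2) - 1) ^ 2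
    + 2 * exp x / (exp x - 1) ^ 2

lemma exp_sub_one_pos {x : ℝ} (hx : 0 < x) : 0 < exp x - 1 := by
  have := Real.one_lt_exp_iff.mpr hx; linarith

lemma hasDerivAt_sq_exp (x : ℝ) :
    HasDerivAt (fun y : ℝ => exp (y ^ 2)) (exp (x ^ 2) * (2 * x)) x := by
  have d1 : HasDerivAt (fun y : ℝ => y ^ 2) (2 * x) x := by
    simpa using hasDerivAt_pow 2 x
  exact d1.exp

lemma hasDerivAt_hhF {x : ℝ} (hx : 0 < x) : HasDerivAt hhF (h1F x) x := by
  have hE : 0 < exp (x ^ 2) - 1 := exp_sub_one_pos (pow_pos hx 2)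
  have hu : 0 < exp x - 1 := exp_sub_one_pos hx
  have d3 : HasDerivAt (fun y : ℝ => exp (y ^ 2) - 1) (exp (x ^ 2) * (2 * x)) x :=
    (hasDerivAt_sq_exp x).sub_const 1
  have d4 := d3.log hE.ne'
  have d5 : HasDerivAt (fun y : ℝ => exp y - 1) (exp x) x := (Real.hasDerivAt_exp x).sub_const 1
  have d6 := d5.log hu.ne'
  have := d4.sub (d6.const_mul 2)
  refine this.congr_deriv ?_
  unfold h1F
  ring

lemma hasDerivAt_h1F {x : ℝ} (hx : 0 < x) : HasDerivAt h1F (h2F x) x := by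
  have hE : 0 < exp (x ^ 2) - 1 := exp_sub_one_pos (pow_pos hx 2)
  have hu : 0 < exp x - 1 := exp_sub_one_pos hx
  have d2 := hasDerivAt_sq_exp x
  have dnum : HasDerivAt (fun y : ℝ => 2 * y * exp (y ^ 2))
      (2 * exp (x ^ 2) + 2 * x * (exp (x ^ 2) * (2 * x))) x := by
    have dl : HasDerivAt (fun y : ℝ => 2 * y) 2 x := by
      simpa using (hasDerivAt_id x).const_mul 2
    exact dl.mul d2
  have d3 : HasDerivAt (fun y : ℝ => exp (y ^ 2) - 1) (exp (x ^ 2) * (2 * x)) x :=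
    d2.sub_const 1
  have dA : HasDerivAt (fun y : ℝ => 2 * y * exp (y ^ 2) / (exp (y ^ 2) - 1))
      (((2 * exp (x ^ 2) + 2 * x * (exp (x ^ 2) * (2 * x))) * (exp (x ^ 2) - 1)
        - 2 * x * exp (x ^ 2) * (exp (x ^ 2) * (2 * x))) / (exp (x ^ 2) - 1) ^ 2) x :=
    dnum.div d3 hE.ne'
  have dnum2 : HasDerivAt (fun y : ℝ => 2 * exp y) (2 * exp x) x :=
    (Real.hasDerivAt_exp x).const_mul 2
  have d5 : HasDerivAt (fun y : ℝ => exp y - 1) (exp x) x := (Real.hasDerivAt_exp x).sub_const 1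
  have dB : HasDerivAt (fun y : ℝ => 2 * exp y / (exp y - 1))
      ((2 * exp x * (exp x - 1) - 2 * exp x * exp x) / (exp x - 1) ^ 2) x :=
    dnum2.div d5 hu.ne'
  have := dA.sub dB
  refine this.congr_deriv ?_
  unfold h2F
  field_simp
  ring

lemma two_exp_le : ∀ x : ℝ, 0 ≤ x → 2 * (exp x - 1) ≤ x * (exp x + 1) := by
  intro x hx
  set F : ℝ → ℝ := fun y => y * (exp y + 1) - 2 * (exp y - 1) with hF
  have hd : ∀ y : ℝ, HasDerivAt F (1 - (1 - y) * exp y) y := by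
    intro y
    have d1 : HasDerivAt (fun z : ℝ => z * (exp z + 1))
        (1 * (exp y + 1) + y * exp y) y :=
      (hasDerivAt_id y).mul ((Real.hasDerivAt_exp y).add_const 1)
    have d2 : HasDerivAt (fun z : ℝ => 2 * (exp z - 1)) (2 * exp y) y :=
      ((Real.hasDerivAt_exp y).sub_const 1).const_mul 2
    have := d1.sub d2
    refine this.congr_deriv ?_
    ring
  have hmono : MonotoneOn F (Ici (0 : ℝ)) := by
    apply monotoneOn_of_deriv_nonneg (convex_Ici 0)
    · exact fun y _ => (hd y).continuousAt.continuousWithinAt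
    · exact fun y _ => (hd y).differentiableAt.differentiableWithinAt
    · intro y hy
      rw [interior_Ici] at hy
      rw [(hd y).deriv]
      have h1 : (1 - y) ≤ exp (-y) := by
        have := Real.add_one_le_exp (-y); linarith
      have h2 : (1 - y) * exp y ≤ exp (-y) * exp y :=
        mul_le_mul_of_nonneg_right h1 (exp_pos y).le
      rw [← Real.exp_add] at h2
      simp at h2
      linarith
  have h0 : F 0 = 0 := by simp [hF]
  have := hmono (self_mem_Ici) (mem_Ici.mpr hx) hx
  rw [h0] at this
  simp only [hF] at this
  linarith

lemma cubic_le_exp {t : ℝ} (ht : 0 ≤ t) : 1 + t + t ^ 2 / 2 + t ^ 3 / 6 ≤ exp t := by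
  have := Real.sum_le_exp_of_nonneg ht 4
  norm_num [Finset.sum_range_succ, Nat.factorial] at this
  linarith

lemma quartic_le_exp {t : ℝ} (ht : 0 ≤ t) :
    1 + t + t ^ 2 / 2 + t ^ 3 / 6 + t ^ 4 / 24 ≤ exp t := by
  have := Real.sum_le_exp_of_nonneg ht 5
  norm_num [Finset.sum_range_succ, Nat.factorial] at this
  linarith

lemma sq_bound {x : ℝ} (hx : 0 < x) :
    (exp x - 1) ^ 2 ≤ x ^ 2 * exp x * exp (x ^ 2 / 4) := by
  have hu : 0 < exp x - 1 := exp_sub_one_pos hx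
  have h1 : 2 * (exp x - 1) ≤ x * (exp x + 1) := two_exp_le x hx.le
  have hsq : (2 * (exp x - 1)) ^ 2 ≤ (x * (exp x + 1)) ^ 2 := by
    apply sq_le_sq' <;> nlinarith [exp_pos x]
  have hcosh : Real.cosh (x / 2) ≤ exp (x ^ 2 / 8) := by
    have := Real.cosh_le_exp_half_sq (x / 2)
    convert this using 2
    ring
  have hs : exp (x / 2) * exp (x / 2) = exp x := by
    rw [← Real.exp_add]; ring_nf
  have h2 : exp (x / 2) + exp (-(x / 2)) ≤ 2 * exp (x ^ 2 / 8) := by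
    have hc := Real.cosh_eq (x / 2)
    rw [hc] at hcosh
    linarith
  have hcosh' : exp x + 1 ≤ 2 * exp (x / 2) * exp (x ^ 2 / 8) := by
    have h3 := mul_le_mul_of_nonneg_left h2 (exp_pos (x / 2)).le
    rw [mul_add, hs] at h3
    have h4 : exp (x / 2) * exp (-(x / 2)) = 1 := by
      rw [← Real.exp_add]; simp
    rw [h4] at h3
    linarith
  have h4 : (exp x + 1) ^ 2 ≤ (2 * exp (x / 2) * exp (x ^ 2 / 8)) ^ 2 := by
    apply sq_le_sq' <;> nlinarith [exp_pos x, exp_pos (x / 2), exp_pos (x ^ 2 / 8)]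
  have h5 : (2 * exp (x / 2) * exp (x ^ 2 / 8)) ^ 2 = 4 * exp x * exp (x ^ 2 / 4) := by
    have h8 : exp (x ^ 2 / 8) * exp (x ^ 2 / 8) = exp (x ^ 2 / 4) := by
      rw [← Real.exp_add]; ring_nf
    nlinarith [hs, h8]
  nlinarith [hsq, h4, h5, sq_nonneg x, exp_pos x, exp_pos (x ^ 2 / 4)]

lemma quintic_pos {t : ℝ} (ht : 0 < t) (ht' : t < 8 / 5) :
    0 < 1 / 4 - 7 * t / 64 - 11 * t ^ 2 / 64 + 109 * t ^ 3 / 2304 + 35 * t ^ 4 / 1152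
      + 25 * t ^ 5 / 2304 := by
  nlinarith [mul_pos ht (sub_pos.mpr ht'), sq_nonneg (t - 1), sq_nonneg t, sq_nonneg (t - 8/5),
    mul_pos (mul_pos ht ht) (sub_pos.mpr ht'), pow_pos ht 3, pow_pos ht 4,
    mul_pos (mul_pos (mul_pos ht ht) ht) (sub_pos.mpr ht'),
    mul_nonneg (sq_nonneg (t - 1)) ht.le, mul_nonneg (sq_nonneg (t-1)) (sq_nonneg t)]

lemma keyQ {t u : ℝ} (ht : 0 < t) (hu1 : 1 < u)
    (hb : (u - 1) ^ 2 ≤ t * u * exp (t / 4)) :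
    0 < exp t * (u - 1) ^ 2 * (exp t - 1 - 2 * t) + u * (exp t - 1) ^ 2 := by
  set E := exp t with hEdef
  have hE1 : 1 < E := Real.one_lt_exp_iff.mpr ht
  have hEpos : 0 < E := by linarith
  have hupos : 0 < u := by linarith
  rcases le_or_gt (1 + 2 * t) E with hcase | hcase
  · have h1 : 0 ≤ E * (u - 1) ^ 2 * (E - 1 - 2 * t) := by
      apply mul_nonneg (mul_nonneg hEpos.le (sq_nonneg _)); linarith
    nlinarith [sq_nonneg (E - 1)]
  · have hcub : 1 + t + t ^ 2 / 2 + t ^ 3 / 6 ≤ E := cubic_le_exp ht.le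
    have hquar : 1 + t + t ^ 2 / 2 + t ^ 3 / 6 + t ^ 4 / 24 ≤ E := quartic_le_exp ht.le
    have ht85 : t < 8 / 5 := by nlinarith
    have h1t : 0 < 1 - 5 * t / 8 := by linarith
    have hexp54 : exp (5 * t / 4) * (1 - 5 * t / 8) ^ 2 ≤ 1 := by
      have ha : 1 - 5 * t / 8 ≤ exp (-(5 * t / 8)) := by
        have := Real.add_one_le_exp (-(5 * t / 8)); linarith
      have hb2 : (1 - 5 * t / 8) ^ 2 ≤ exp (-(5 * t / 8)) ^ 2 := by
        apply sq_le_sq' <;> nlinarith [exp_pos (-(5 * t / 8))]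
      have hc : exp (-(5 * t / 8)) ^ 2 = exp (-(5 * t / 4)) := by
        rw [sq, ← Real.exp_add]; ring_nf
      rw [hc] at hb2
      have hd := mul_le_mul_of_nonneg_left hb2 (exp_pos (5 * t / 4)).le
      rw [← Real.exp_add] at hd
      norm_num at hd
      linarith
    have hEe : E * exp (t / 4) = exp (5 * t / 4) := by
      rw [hEdef, ← Real.exp_add]; ring_nf
    have hpos : 0 < 1 + 2 * t - E := by linarith
    have hc1 : 1 + 2 * t - E ≤ t - t ^ 2 / 2 - t ^ 3 / 6 := by linarith
    have hc1pos : 0 < t - t ^ 2 / 2 - t ^ 3 / 6 := lt_of_lt_of_le hpos hc1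
    have step1 : E * (u - 1) ^ 2 * (1 + 2 * t - E)
        ≤ u * (t * exp (5 * t / 4) * (t - t ^ 2 / 2 - t ^ 3 / 6)) := by
      have s1 : E * (u - 1) ^ 2 * (1 + 2 * t - E)
          ≤ E * (t * u * exp (t / 4)) * (1 + 2 * t - E) := by
        apply mul_le_mul_of_nonneg_right _ hpos.le
        exact mul_le_mul_of_nonneg_left hb hEpos.le
      have s2 : E * (t * u * exp (t / 4)) * (1 + 2 * t - E)
          ≤ E * (t * u * exp (t / 4)) * (t - t ^ 2 / 2 - t ^ 3 / 6) := by
        apply mul_le_mul_of_nonneg_left hc1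
        positivity
      have s3 : E * (t * u * exp (t / 4)) * (t - t ^ 2 / 2 - t ^ 3 / 6)
          = u * (t * exp (5 * t / 4) * (t - t ^ 2 / 2 - t ^ 3 / 6)) := by
        rw [← hEe]; ring
      linarith
    have step2 : t * exp (5 * t / 4) * (t - t ^ 2 / 2 - t ^ 3 / 6)
        < (t + t ^ 2 / 2 + t ^ 3 / 6) ^ 2 := by
      have hq := quintic_pos ht ht85
      have hp : t * (t - t ^ 2 / 2 - t ^ 3 / 6)
          < (t + t ^ 2 / 2 + t ^ 3 / 6) ^ 2 * (1 - 5 * t / 8) ^ 2 := by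
        have hfac : (t + t ^ 2 / 2 + t ^ 3 / 6) ^ 2 * (1 - 5 * t / 8) ^ 2
            - t * (t - t ^ 2 / 2 - t ^ 3 / 6)
            = t ^ 3 * (1 / 4 - 7 * t / 64 - 11 * t ^ 2 / 64 + 109 * t ^ 3 / 2304
              + 35 * t ^ 4 / 1152 + 25 * t ^ 5 / 2304) := by ring
        linarith [hfac, mul_pos (pow_pos ht 3) hq]
      have hmul : t * exp (5 * t / 4) * (t - t ^ 2 / 2 - t ^ 3 / 6) * (1 - 5 * t / 8) ^ 2
          ≤ t * (t - t ^ 2 / 2 - t ^ 3 / 6) := by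
        have heq2 : t * exp (5 * t / 4) * (t - t ^ 2 / 2 - t ^ 3 / 6) * (1 - 5 * t / 8) ^ 2
            = (t * (t - t ^ 2 / 2 - t ^ 3 / 6)) * (exp (5 * t / 4) * (1 - 5 * t / 8) ^ 2) := by
          ring
        rw [heq2]
        nlinarith [mul_pos ht hc1pos, hexp54]
      have hlt : t * exp (5 * t / 4) * (t - t ^ 2 / 2 - t ^ 3 / 6) * (1 - 5 * t / 8) ^ 2
          < (t + t ^ 2 / 2 + t ^ 3 / 6) ^ 2 * (1 - 5 * t / 8) ^ 2 := lt_of_le_of_lt hmul hp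
      have hsqpos : 0 < (1 - 5 * t / 8) ^ 2 := by positivity
      exact lt_of_mul_lt_mul_right (by linarith) hsqpos.le
    have step3 : (t + t ^ 2 / 2 + t ^ 3 / 6) ^ 2 ≤ (E - 1) ^ 2 := by
      apply sq_le_sq' <;> nlinarith
    have final : E * (u - 1) ^ 2 * (1 + 2 * t - E) < u * (E - 1) ^ 2 := by
      calc E * (u - 1) ^ 2 * (1 + 2 * t - E)
          ≤ u * (t * exp (5 * t / 4) * (t - t ^ 2 / 2 - t ^ 3 / 6)) := step1
        _ < u * (t + t ^ 2 / 2 + t ^ 3 / 6) ^ 2 := by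
            exact mul_lt_mul_of_pos_left step2 hupos
        _ ≤ u * (E - 1) ^ 2 := mul_le_mul_of_nonneg_left step3 hupos.le
    nlinarith [final]

lemma h2F_pos {x : ℝ} (hx : 0 < x) : 0 < h2F x := by
  have ht : 0 < x ^ 2 := pow_pos hx 2
  have hE1 : 1 < exp (x ^ 2) := Real.one_lt_exp_iff.mpr ht
  have hu1 : 1 < exp x := Real.one_lt_exp_iff.mpr hx
  have hb : (exp x - 1) ^ 2 ≤ x ^ 2 * exp x * exp (x ^ 2 / 4) := sq_bound hx
  have key := keyQ ht hu1 hb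
  have hE1' : (0:ℝ) < exp (x ^ 2) - 1 := by linarith
  have hu1' : (0:ℝ) < exp x - 1 := by linarith
  have heq : h2F x = 2 * (exp (x ^ 2) * (exp x - 1) ^ 2 * (exp (x ^ 2) - 1 - 2 * x ^ 2)
      + exp x * (exp (x ^ 2) - 1) ^ 2) / ((exp (x ^ 2) - 1) ^ 2 * (exp x - 1) ^ 2) := by
    unfold h2F
    field_simp
    ring
  rw [heq]
  positivity

lemma hhF_strictConvexOn : StrictConvexOn ℝ (Ioi (0:ℝ)) hhF := by
  apply strictConvexOn_of_deriv2_pos (convex_Ioi 0)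
  · exact fun y hy => (hasDerivAt_hhF hy).continuousAt.continuousWithinAt
  · intro y hy
    rw [interior_Ioi] at hy
    have hev : deriv hhF =ᶠ[nhds y] h1F := by
      filter_upwards [Ioi_mem_nhds hy] with z hz using (hasDerivAt_hhF hz).deriv
    have hd2 : deriv (deriv hhF) y = h2F y := by
      rw [Filter.EventuallyEq.deriv_eq hev, (hasDerivAt_h1F hy).deriv]
    simpa [Function.iterate_succ, Function.iterate_zero, hd2] using h2F_pos hy

/-- `g(x) = (e^{x²} - 1)/(e^x - 1)²` is strictly convex on `(0, ∞)`. -/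
theorem stmt_13 :
    StrictConvexOn ℝ (Set.Ioi 0)
      (fun x : ℝ => (Real.exp (x ^ 2) - 1) / (Real.exp x - 1) ^ 2) := by
  have hg : ∀ z ∈ Ioi (0:ℝ), (exp (z ^ 2) - 1) / (exp z - 1) ^ 2 = exp (hhF z) := by
    intro z hz
    have hz' : (0:ℝ) < z := hz
    have h1 : 0 < exp (z ^ 2) - 1 := exp_sub_one_pos (pow_pos hz' 2)
    have h2 : 0 < exp z - 1 := exp_sub_one_pos hz'
    unfold hhF
    rw [Real.exp_sub, Real.exp_log h1, two_mul, Real.exp_add, Real.exp_log h2, ← sq]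
  refine ⟨convex_Ioi 0, fun x hx y hy hxy a b ha hb hab => ?_⟩
  have hz : a • x + b • y ∈ Ioi (0:ℝ) := (convex_Ioi 0) hx hy ha.le hb.le hab
  simp only [smul_eq_mul] at *
  rw [hg _ hz, hg _ hx, hg _ hy]
  have hconv := hhF_strictConvexOn.2 hx hy hxy ha hb hab
  simp only [smul_eq_mul] at hconv
  calc exp (hhF (a * x + b * y)) < exp (a * hhF x + b * hhF y) := Real.exp_lt_exp.mpr hconv
    _ ≤ a * exp (hhF x) + b * exp (hhF y) := by
        have := convexOn_exp.2 (Set.mem_univ (hhF x)) (Set.mem_univ (hhF y)) ha.le hb.le hab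
        simpa using this
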